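/- (1) For every t ≥ 0 the limit g_r(t) := lim_{k→∞} (1/k)·log I_{k,r}(t) exists in ℝ. (2) There exists a unique s_r > 0 such that g_r(s_r/(s_r + r)) = 0. (3) With t_r := s_r/(s_r + r), there exists a constant C ≥ 1 such that C^{−1} · I_{k,r}(t_r) ≤ I_{p,r}(t_r) ≤ C · I_{k,r}(t_r) for all k, p ≥ 1. -/

import Mathlib

open Filter MeasureTheory
open scoped BigOperators ENNReal NNReal Topology

namespace LGQ

noncomputable section

/-- The alphabet `G = {(i,j) : 1 ≤ i ≤ n_j, 1 ≤ j ≤ m}`, encoded as a sigma type: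
an element is `⟨j, i⟩` with `j : Fin m` (the `y`-coordinate) and `i : Fin (n j)`. -/
abbrev Alph (m : ℕ) (n : Fin m → ℕ) := Σ j : Fin m, Fin (n j)

/-- A pair `σ = (σ_L, σ_R)` with `σ_L ∈ G^*` and `σ_R ∈ G_y^*`. -/
abbrev Wd (m : ℕ) (n : Fin m → ℕ) := List (Alph m n) × List (Fin m)

variable {m : ℕ} {n : Fin m → ℕ}

/-- `a_ω := ∏ a_{i_h j_h}` along a word `ω ∈ G^*`. -/
def aP (a : Alph m n → ℝ) (w : List (Alph m n)) : ℝ := (w.map a).prod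

/-- `b_τ := ∏ b_{j_h}` along a word `τ ∈ G_y^*`. -/
def bP (b : Fin m → ℝ) (τ : List (Fin m)) : ℝ := (τ.map b).prod

/-- `σ_y := (σ_L)_y ∗ σ_R` : the `y`-word of a pair `σ = σ_L ∗ σ_R`. -/
def sy (σ : Wd m n) : List (Fin m) := σ.1.map Sigma.fst ++ σ.2

/-- `Ψ_l := {σ = σ_L ∗ σ_R : σ_L ∈ G^l, σ_R ∈ G_y^*, b_{(σ_y)^-} ≥ a_{σ_L} > b_{σ_y}}`. -/
def Psi (a : Alph m n → ℝ) (b : Fin m → ℝ) (l : ℕ) : Set (Wd m n) :=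
  {σ | σ.1.length = l ∧ 1 ≤ σ.2.length ∧
    aP a σ.1 ≤ bP b (sy σ).dropLast ∧ bP b (sy σ) < aP a σ.1}

/-- `Ψ^* := ⋃_{l ≥ 1} Ψ_l`. -/
def PsiStar (a : Alph m n → ℝ) (b : Fin m → ℝ) : Set (Wd m n) :=
  {σ | ∃ l, 1 ≤ l ∧ σ ∈ Psi a b l}

/-- `q_j := Σ_{i=1}^{n_j} p_{ij}`. -/
def qf (p : Alph m n → ℝ) (j : Fin m) : ℝ := ∑ i : Fin (n j), p ⟨j, i⟩

/-- `p_{σ_L} := ∏ p_{i_h j_h}`. -/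
def pP (p : Alph m n → ℝ) (w : List (Alph m n)) : ℝ := (w.map p).prod

/-- `q_{σ_R} := ∏ q_{j_h}`. -/
def qP (p : Alph m n → ℝ) (τ : List (Fin m)) : ℝ := (τ.map (qf p)).prod

/-- `E_r(σ) := p_{σ_L} q_{σ_R} a_{σ_L}^r` (note `E_r(θ) = 1`). -/
def Er (a p : Alph m n → ℝ) (r : ℝ) (σ : Wd m n) : ℝ :=
  pP p σ.1 * qP p σ.2 * aP a σ.1 ^ r

/-- `a̲ := min a_{ij}`. -/
def aLo (a : Alph m n → ℝ) : ℝ := ⨅ g, a g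

/-- `ā := max a_{ij}`. -/
def aHi (a : Alph m n → ℝ) : ℝ := ⨆ g, a g

/-- `b̲ := min b_j`. -/
def bLo (b : Fin m → ℝ) : ℝ := ⨅ j, b j

/-- `b̄ := max b_j`. -/
def bHi (b : Fin m → ℝ) : ℝ := ⨆ j, b j

/-- `p̲ := min p_{ij}`. -/
def pLo (p : Alph m n → ℝ) : ℝ := ⨅ g, p g

/-- `q̲ := min q_j`. -/
def qLo (p : Alph m n → ℝ) : ℝ := ⨅ j, qf p j

/-- `A_1 := ⌊log a̲ / log b̄⌋ + 1`. -/
def A1 (a : Alph m n → ℝ) (b : Fin m → ℝ) : ℤ :=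
  ⌊Real.log (aLo a) / Real.log (bHi b)⌋ + 1

/-- `A_2 := ⌊log b̲ / log ā⌋ + 1`. -/
def A2 (a : Alph m n → ℝ) (b : Fin m → ℝ) : ℤ :=
  ⌊Real.log (bLo b) / Real.log (aHi a)⌋ + 1

/-- `A_3 := max_{(i,j)∈G} a_{ij}/b_j`. -/
def A3 (a : Alph m n → ℝ) (b : Fin m → ℝ) : ℝ := ⨆ g : Alph m n, a g / b g.1

/-- `A_4 := log A_3 / log b̲`. -/
def A4 (a : Alph m n → ℝ) (b : Fin m → ℝ) : ℝ := Real.log (A3 a b) / Real.log (bLo b)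

/-- `A_6 := ⌊1/A_4⌋`. -/
def A6 (a : Alph m n → ℝ) (b : Fin m → ℝ) : ℤ := ⌊1 / A4 a b⌋

/-- `η̲_r := p̲ q̲^{A_1} a̲^r`. -/
def etaLo (a : Alph m n → ℝ) (b : Fin m → ℝ) (p : Alph m n → ℝ) (r : ℝ) : ℝ :=
  pLo p * qLo p ^ A1 a b * aLo a ^ r

/-- `A_{5,r} := ⌊log(q̲² η̲_r)/(r·log ā)⌋`. -/
def A5 (a : Alph m n → ℝ) (b : Fin m → ℝ) (p : Alph m n → ℝ) (r : ℝ) : ℤ :=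
  ⌊Real.log (qLo p ^ 2 * etaLo a b p r) / (r * Real.log (aHi a))⌋

/-- `T_{1,r} := ⌊(A_1 + A_{5,r} + 3)/A_4⌋`. -/
def T1 (a : Alph m n → ℝ) (b : Fin m → ℝ) (p : Alph m n → ℝ) (r : ℝ) : ℤ :=
  ⌊((A1 a b + A5 a b p r + 3 : ℤ) : ℝ) / A4 a b⌋

/-- `ρ = σ^♭`:  for `σ ∈ Ψ_1`, `σ^♭ = θ`; for `σ ∈ Ψ_l` with `l ≥ 2`, `σ^♭` is the unique
`ρ ∈ Ψ_{l-1}` with `ρ_L = (σ_L)^-` and `ρ_y` an initial segment of `σ_y`. -/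
def IsFlat (a : Alph m n → ℝ) (b : Fin m → ℝ) (σ ρ : Wd m n) : Prop :=
  (σ.1.length = 1 ∧ ρ = (([], []) : Wd m n)) ∨
  (2 ≤ σ.1.length ∧ ρ ∈ Psi a b (σ.1.length - 1) ∧ ρ.1 = σ.1.dropLast ∧ sy ρ <+: sy σ)

/-- `Λ_{n,r} := {σ ∈ Ψ^* : E_r(σ^♭) ≥ η̲_r^n > E_r(σ)}`. -/
def Lam (a : Alph m n → ℝ) (b : Fin m → ℝ) (p : Alph m n → ℝ) (r : ℝ) (N : ℕ) :
    Set (Wd m n) :=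
  {σ | σ ∈ PsiStar a b ∧ ∃ ρ : Wd m n, IsFlat a b σ ρ ∧
    etaLo a b p r ^ N ≤ Er a p r ρ ∧ Er a p r σ < etaLo a b p r ^ N}

/-- `S_{n,r} := {σ ∈ Ψ^* : η̲_r^{n+1} ≤ E_r(σ) < η̲_r^n}`. -/
def Snr (a : Alph m n → ℝ) (b : Fin m → ℝ) (p : Alph m n → ℝ) (r : ℝ) (N : ℕ) :
    Set (Wd m n) :=
  {σ | σ ∈ PsiStar a b ∧ etaLo a b p r ^ (N + 1) ≤ Er a p r σ ∧
    Er a p r σ < etaLo a b p r ^ N}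

/-- `G_1(σ) := {ω ∈ S_{n,r} : σ_L ⪯ ω_L and σ_y ⪯ ω_y}`. -/
def G1 (a : Alph m n → ℝ) (b : Fin m → ℝ) (p : Alph m n → ℝ) (r : ℝ) (N : ℕ)
    (σ : Wd m n) : Set (Wd m n) :=
  {ω | ω ∈ Snr a b p r N ∧ σ.1 <+: ω.1 ∧ sy σ <+: sy ω}

/-- `Λ_h(σ) := {ρ ∈ Φ_{l+h} : σ ⪯ ρ}` (componentwise order on pairs). -/
def LamH (a : Alph m n → ℝ) (b : Fin m → ℝ) (σ : Wd m n) (h : ℕ) : Set (Wd m n) :=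
  {ρ | ρ ∈ Psi a b (σ.1.length + h) ∧ σ.1 <+: ρ.1 ∧ σ.2 <+: ρ.2}

/-- `I_{k,r}(t) := Σ_{ω∈Φ_k} E_r(ω)^t`. -/
def Ih (a : Alph m n → ℝ) (b : Fin m → ℝ) (p : Alph m n → ℝ) (r : ℝ) (k : ℕ) (t : ℝ) : ℝ :=
  ∑' ω : Psi a b k, Er a p r ω.1 ^ t

/-- `Υ_n(t,s) := Σ_{σ∈Ψ_n} (p_{σ_L} q_{σ_R})^t a_{σ_L}^s`. -/
def Ups (a : Alph m n → ℝ) (b : Fin m → ℝ) (p : Alph m n → ℝ) (N : ℕ) (t s : ℝ) : ℝ :=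
  ∑' σ : Psi a b N, (pP p σ.1.1 * qP p σ.1.2) ^ t * aP a σ.1.1 ^ s

/-- `τ_0 := ((1,j_0),(n_{j_0},j_0))`. -/
def tau0 (j0 : Fin m) (h : 2 ≤ n j0) : List (Alph m n) :=
  [⟨j0, ⟨0, by omega⟩⟩, ⟨j0, ⟨n j0 - 1, by omega⟩⟩]

/-- `σ̄` is a bar-extension of `σ ∈ Ψ_l`: `σ̄ ∈ Ψ_{l+2}`, `σ̄_L = σ_L ∗ τ_0`, `σ_R ⪯ σ̄_R`. -/
def BarExt (a : Alph m n → ℝ) (b : Fin m → ℝ) (j0 : Fin m) (h : 2 ≤ n j0)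
    (σ σb : Wd m n) : Prop :=
  σb ∈ Psi a b (σ.1.length + 2) ∧ σb.1 = σ.1 ++ tau0 j0 h ∧ σ.2 <+: σb.2

/-- cylinder set `[σ] ⊆ Φ_∞ = G^ℕ × G_y^ℕ`. -/
def Cyl (σ : Wd m n) : Set ((ℕ → Alph m n) × (ℕ → Fin m)) :=
  {x | (∀ i : ℕ, ∀ hi : i < σ.1.length, x.1 i = σ.1.get ⟨i, hi⟩) ∧
       (∀ i : ℕ, ∀ hi : i < σ.2.length, x.2 i = σ.2.get ⟨i, hi⟩)}

/-- the affine map `f_{ij}(x,y) = (a_{ij} x + c_{ij}, b_j y + d_j)`. -/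
def fmap (a : Alph m n → ℝ) (b : Fin m → ℝ) (c : Alph m n → ℝ) (d : Fin m → ℝ)
    (g : Alph m n) : ℝ × ℝ → ℝ × ℝ :=
  fun x => (a g * x.1 + c g, b g.1 * x.2 + d g.1)

/-- `A_{L,σ} = c_{i_1j_1} + Σ_{p≥2} (∏_{h<p} a_{i_hj_h}) c_{i_pj_p}`. -/
def xL (a c : Alph m n → ℝ) : List (Alph m n) → ℝ
  | [] => 0
  | g :: w => c g + a g * xL a c w

/-- `B_{L,σ} = d_{j_1} + Σ_{p≥2} (∏_{h<p} b_{j_h}) d_{j_p}`. -/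
def yL (b d : Fin m → ℝ) : List (Fin m) → ℝ
  | [] => 0
  | j :: τ => d j + b j * yL b d τ

/-- the approximate square `F_σ = [A_{L,σ}, A_{L,σ}+a_{σ_L}] × [B_{L,σ}, B_{L,σ}+b_{σ_y}]`. -/
def Fsq (a c : Alph m n → ℝ) (b d : Fin m → ℝ) (σ : Wd m n) : Set (ℝ × ℝ) :=
  Set.Icc (xL a c σ.1) (xL a c σ.1 + aP a σ.1) ×ˢ
    Set.Icc (yL b d (sy σ)) (yL b d (sy σ) + bP b (sy σ))

/-- the Euclidean distance on `ℝ²`. -/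
def eudist (x y : ℝ × ℝ) : ℝ := Real.sqrt ((x.1 - y.1) ^ 2 + (x.2 - y.2) ^ 2)

/-- the horizontal distance `d_h(S,T) = inf{|x-x'| : (x,y)∈S, (x',y')∈T}`. -/
def dH (S T : Set (ℝ × ℝ)) : ℝ := sInf {e | ∃ x ∈ S, ∃ y ∈ T, e = |x.1 - y.1|}

/-- the (Euclidean) diameter of a subset of `ℝ²`. -/
def euDiam (S : Set (ℝ × ℝ)) : ℝ := sSup {e | ∃ x ∈ S, ∃ y ∈ S, e = eudist x y}

/-- the `N`-th quantization error of order `r`. -/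
def qerr (μ : Measure (ℝ × ℝ)) (r : ℝ) (N : ℕ) : ℝ :=
  sInf {e : ℝ | ∃ α : Finset (ℝ × ℝ), ∃ hα : α.Nonempty, α.card ≤ N ∧
    e = (∫ x, α.inf' hα (fun y => eudist x y ^ r) ∂μ) ^ (1 / r)}

/-- the topological support of a measure on `ℝ²`. -/
def suppSet (μ : Measure (ℝ × ℝ)) : Set (ℝ × ℝ) :=
  {x | ∀ U : Set (ℝ × ℝ), IsOpen U → x ∈ U → μ U ≠ 0}

/-- the dyadic square `[k 2^{-N}, (k+1) 2^{-N}) × [k' 2^{-N}, (k'+1) 2^{-N})`. -/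
def Dy (N : ℕ) (k : ℤ × ℤ) : Set (ℝ × ℝ) :=
  Set.Ico ((k.1 : ℝ) * (2 : ℝ) ^ (-(N : ℤ))) (((k.1 : ℝ) + 1) * (2 : ℝ) ^ (-(N : ℤ))) ×ˢ
    Set.Ico ((k.2 : ℝ) * (2 : ℝ) ^ (-(N : ℤ))) (((k.2 : ℝ) + 1) * (2 : ℝ) ^ (-(N : ℤ)))


/-! ### Auxiliary development for the proof -/

section ListAux

variable {α : Type*}

private lemma listProd_pos {f : α → ℝ} (hf : ∀ i, 0 < f i) (l : List α) :
    0 < (l.map f).prod := by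
  induction l with
  | nil => simp
  | cons x l ih => simpa using mul_pos (hf x) ih

private lemma listProd_nonneg {f : α → ℝ} (hf : ∀ i, 0 ≤ f i) (l : List α) :
    0 ≤ (l.map f).prod :=
  List.prod_nonneg fun y hy => by obtain ⟨i, -, rfl⟩ := List.mem_map.1 hy; exact hf i

private lemma listProd_rpow {f : α → ℝ} (hf : ∀ i, 0 ≤ f i) (l : List α) (t : ℝ) :
    (l.map f).prod ^ t = (l.map fun i => f i ^ t).prod := by
  induction l with
  | nil => simp
  | cons x l ih =>
      simp only [List.map_cons, List.prod_cons]
      rw [Real.mul_rpow (hf x) (listProd_nonneg hf l), ih]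

private lemma listProd_mul (f g : α → ℝ) (l : List α) :
    (l.map fun i => f i * g i).prod = (l.map f).prod * (l.map g).prod := by
  induction l with
  | nil => simp
  | cons x l ih => simp only [List.map_cons, List.prod_cons, ih]; ring

private lemma listProd_le_pow {f : α → ℝ} {C : ℝ} (h0 : ∀ i, 0 ≤ f i) (hC : ∀ i, f i ≤ C)
    (l : List α) : (l.map f).prod ≤ C ^ l.length := by
  induction l with
  | nil => simp
  | cons x l ih =>
      simp only [List.map_cons, List.prod_cons, List.length_cons, pow_succ, mul_comm _ C]
      exact mul_le_mul (hC x) ih (listProd_nonneg h0 l) ((h0 x).trans (hC x))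

private lemma pow_le_listProd {f : α → ℝ} {c : ℝ} (hc : 0 ≤ c) (hcf : ∀ i, c ≤ f i)
    (l : List α) : c ^ l.length ≤ (l.map f).prod := by
  induction l with
  | nil => simp
  | cons x l ih =>
      simp only [List.map_cons, List.prod_cons, List.length_cons, pow_succ, mul_comm _ c]
      exact mul_le_mul (hcf x) ih (pow_nonneg hc _) (hc.trans (hcf x))

private lemma listProd_le_listProd {f g : α → ℝ} (h0 : ∀ i, 0 ≤ f i) (hfg : ∀ i, f i ≤ g i)
    (l : List α) : (l.map f).prod ≤ (l.map g).prod := by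
  induction l with
  | nil => simp
  | cons x l ih =>
      simp only [List.map_cons, List.prod_cons]
      exact mul_le_mul (hfg x) ih (listProd_nonneg h0 l) ((h0 x).trans (hfg x))

private lemma finProd_rpow {f : α → ℝ} (s : Finset α) (hf : ∀ i, 0 ≤ f i) (t : ℝ) :
    (∏ i ∈ s, f i) ^ t = ∏ i ∈ s, f i ^ t := by
  classical
  induction s using Finset.induction_on with
  | empty => simp
  | @insert x s hx ih =>
      rw [Finset.prod_insert hx, Finset.prod_insert hx,
        Real.mul_rpow (hf _) (Finset.prod_nonneg fun i _ => hf i), ih]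

end ListAux

section SecAux

variable {m : ℕ} {n : Fin m → ℕ}

private lemma bP_cons (b : Fin m → ℝ) (j : Fin m) (τ : List (Fin m)) :
    bP b (j :: τ) = b j * bP b τ := by simp [bP]

private lemma bP_append (b : Fin m → ℝ) (τ ρ : List (Fin m)) :
    bP b (τ ++ ρ) = bP b τ * bP b ρ := by simp [bP]

private lemma bP_pos {b : Fin m → ℝ} (hb : ∀ j, 0 < b j) (τ : List (Fin m)) :
    0 < bP b τ := listProd_pos hb τ

private lemma bP_le_one {b : Fin m → ℝ} (hb0 : ∀ j, 0 ≤ b j) (hb1 : ∀ j, b j ≤ 1)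
    (τ : List (Fin m)) : bP b τ ≤ 1 := by
  simpa [bP] using listProd_le_pow hb0 hb1 τ

/-- The "section" (stopping) finite set of words `τ` with `b_τ < x ≤ b_{τ⁻}`,
built with fuel `N`. -/
private def SecF (b : Fin m → ℝ) : ℕ → ℝ → Finset (List (Fin m))
  | 0, _ => ∅
  | N + 1, x =>
      Finset.univ.biUnion fun j : Fin m =>
        if b j < x then {[j]} else (SecF b N (x / b j)).image fun τ => j :: τ

private lemma mem_SecF_succ {b : Fin m → ℝ} {N : ℕ} {x : ℝ} {τ : List (Fin m)} :
    τ ∈ SecF b (N + 1) x ↔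
      ∃ j, (b j < x ∧ τ = [j]) ∨
        (¬ b j < x ∧ ∃ τ', τ' ∈ SecF b N (x / b j) ∧ τ = j :: τ') := by
  simp only [SecF, Finset.mem_biUnion, Finset.mem_univ, true_and]
  refine exists_congr fun j => ?_
  split_ifs with h
  · simp [h, Finset.mem_singleton]
  · simp only [h, Finset.mem_image, not_false_iff, true_and, false_and, false_or]
    constructor
    · rintro ⟨τ', h1, h2⟩; exact ⟨τ', h1, h2.symm⟩
    · rintro ⟨τ', h1, h2⟩; exact ⟨τ', h1, h2.symm⟩

private lemma length_le_of_mem_SecF {b : Fin m → ℝ} :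
    ∀ {N : ℕ} {x : ℝ} {τ : List (Fin m)}, τ ∈ SecF b N x → τ.length ≤ N := by
  intro N
  induction N with
  | zero => intro x τ h; simp [SecF] at h
  | succ N ih =>
      intro x τ h
      rcases mem_SecF_succ.1 h with ⟨j, ⟨-, rfl⟩ | ⟨-, τ', hτ', rfl⟩⟩
      · simp
      · simpa using Nat.succ_le_succ (ih hτ')

private lemma mem_SecF_iff {b : Fin m → ℝ} {B : ℝ}
    (hb0 : ∀ j, 0 < b j) (hb1 : ∀ j, b j < 1) (hbB : ∀ j, b j ≤ B) :
    ∀ {N : ℕ} {x : ℝ} {τ : List (Fin m)}, 0 < x → x ≤ 1 → B ^ N < x →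
      (τ ∈ SecF b N x ↔ τ ≠ [] ∧ bP b τ < x ∧ x ≤ bP b τ.dropLast) := by
  intro N
  induction N with
  | zero =>
      intro x τ hx0 hx1 hN
      simp only [pow_zero] at hN
      exact absurd (hN.trans_le hx1) (lt_irrefl _)
  | succ N ih =>
      intro x τ hx0 hx1 hN
      have hcond : ∀ j : Fin m, x ≤ b j →
          (0 < x / b j ∧ x / b j ≤ 1 ∧ B ^ N < x / b j) := by
        intro j hxb
        have hbj := hb0 j
        have hB0 : 0 < B := lt_of_lt_of_le hbj (hbB j)
        refine ⟨div_pos hx0 hbj, (div_le_one hbj).2 hxb, ?_⟩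
        have h1 : B ^ N < x / B := by
          rw [lt_div_iff₀ hB0, ← pow_succ]; exact hN
        exact h1.trans_le (div_le_div_of_nonneg_left hx0.le hbj (hbB j))
      rw [mem_SecF_succ]
      constructor
      · rintro ⟨j, ⟨hj, rfl⟩ | ⟨hj, τ', hτ', rfl⟩⟩
        · refine ⟨by simp, by simpa [bP_cons, bP] using hj, by simpa [bP] using hx1⟩
        · push_neg at hj
          obtain ⟨h0', h1', hN'⟩ := hcond j hj
          obtain ⟨hne, hlt, hle⟩ := (ih h0' h1' hN').1 hτ'
          have hbj := hb0 j
          refine ⟨by simp, ?_, ?_⟩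
          · rw [bP_cons]
            calc b j * bP b τ' < b j * (x / b j) :=
                  mul_lt_mul_of_pos_left hlt hbj
              _ = x := by field_simp
          · have hdl : (j :: τ').dropLast = j :: τ'.dropLast := by
              have : (j :: τ') = [j] ++ τ' := rfl
              rw [this, List.dropLast_append_of_ne_nil hne]; rfl
            rw [hdl, bP_cons]
            rw [div_le_iff₀ hbj] at hle
            linarith [hle]
      · rintro ⟨hne, hlt, hle⟩
        obtain ⟨j, τ', rfl⟩ : ∃ j τ', τ = j :: τ' := by
          cases τ with
          | nil => exact absurd rfl hne
          | cons j τ' => exact ⟨j, τ', rfl⟩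
        rcases eq_or_ne τ' [] with rfl | hτ'ne
        · refine ⟨j, Or.inl ⟨?_, rfl⟩⟩
          simpa [bP_cons, bP] using hlt
        · have hdl : (j :: τ').dropLast = j :: τ'.dropLast := by
            have : (j :: τ') = [j] ++ τ' := rfl
            rw [this, List.dropLast_append_of_ne_nil hτ'ne]; rfl
          rw [hdl, bP_cons] at hle
          have hbj := hb0 j
          have hxble : x ≤ b j := by
            have h2 : bP b τ'.dropLast ≤ 1 :=
              bP_le_one (fun j => (hb0 j).le) (fun j => (hb1 j).le) _
            nlinarith [hbj]
          obtain ⟨h0', h1', hN'⟩ := hcond j hxble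
          refine ⟨j, Or.inr ⟨not_lt.2 hxble, τ', ?_, rfl⟩⟩
          rw [ih h0' h1' hN']
          rw [bP_cons] at hlt
          refine ⟨hτ'ne, ?_, ?_⟩
          · rw [lt_div_iff₀ hbj, mul_comm]; exact hlt
          · rw [div_le_iff₀ hbj, mul_comm]; exact hle

private lemma sum_SecF {b : Fin m → ℝ} {B : ℝ}
    (hb0 : ∀ j, 0 < b j) (hb1 : ∀ j, b j < 1) (hbB : ∀ j, b j ≤ B)
    (w : Fin m → ℝ) (hw : ∑ j, w j = 1) :
    ∀ {N : ℕ} {x : ℝ}, 0 < x → x ≤ 1 → B ^ N < x →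
      ∑ τ ∈ SecF b N x, (τ.map w).prod = 1 := by
  intro N
  induction N with
  | zero =>
      intro x hx0 hx1 hN
      simp only [pow_zero] at hN
      exact absurd (hN.trans_le hx1) (lt_irrefl _)
  | succ N ih =>
      intro x hx0 hx1 hN
      classical
      have hdisj : ((Finset.univ : Finset (Fin m)) : Set (Fin m)).PairwiseDisjoint
          (fun j : Fin m =>
            if b j < x then ({[j]} : Finset (List (Fin m)))
            else (SecF b N (x / b j)).image fun τ => j :: τ) := by
        intro i _ j _ hij
        refine Finset.disjoint_left.2 fun τ hi hj => ?_
        have h1 : ∃ ρ, τ = i :: ρ := by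
          by_cases h : b i < x
          · simp only [if_pos h, Finset.mem_singleton] at hi; exact ⟨[], hi⟩
          · simp only [if_neg h, Finset.mem_image] at hi
            obtain ⟨ρ, -, h'⟩ := hi; exact ⟨ρ, h'.symm⟩
        have h2 : ∃ ρ, τ = j :: ρ := by
          by_cases h : b j < x
          · simp only [if_pos h, Finset.mem_singleton] at hj; exact ⟨[], hj⟩
          · simp only [if_neg h, Finset.mem_image] at hj
            obtain ⟨ρ, -, h'⟩ := hj; exact ⟨ρ, h'.symm⟩
        obtain ⟨ρ1, rfl⟩ := h1
        obtain ⟨ρ2, heq⟩ := h2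
        cases heq; exact hij rfl
      rw [show SecF b (N + 1) x = Finset.univ.biUnion fun j : Fin m =>
            if b j < x then {[j]} else (SecF b N (x / b j)).image fun τ => j :: τ from rfl,
        Finset.sum_biUnion hdisj]
      rw [← hw]
      refine Finset.sum_congr rfl fun j _ => ?_
      have hbj := hb0 j
      have hB0 : 0 < B := lt_of_lt_of_le hbj (hbB j)
      split_ifs with h
      · simp
      · push_neg at h
        have h0' : 0 < x / b j := div_pos hx0 hbj
        have h1' : x / b j ≤ 1 := (div_le_one hbj).2 h
        have hN' : B ^ N < x / b j := by
          have h1 : B ^ N < x / B := by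
            rw [lt_div_iff₀ hB0, ← pow_succ]; exact hN
          exact h1.trans_le (div_le_div_of_nonneg_left hx0.le hbj (hbB j))
        rw [Finset.sum_image (fun τ1 _ τ2 _ h => by injection h)]
        have : ∀ τ ∈ SecF b N (x / b j),
            ((j :: τ).map w).prod = w j * (τ.map w).prod := by
          intro τ _; simp
        rw [Finset.sum_congr rfl this, ← Finset.mul_sum, ih h0' h1' hN', mul_one]

end SecAux

section PsiAux

variable {m : ℕ} {n : Fin m → ℕ}

private lemma aP_le_bPy {a : Alph m n → ℝ} {b : Fin m → ℝ}
    (ha : ∀ g, 0 < a g ∧ a g < b g.1) (w : List (Alph m n)) :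
    aP a w ≤ bP b (w.map Sigma.fst) := by
  have h : bP b (w.map Sigma.fst) = (w.map fun g => b g.1).prod := by
    rw [bP, List.map_map]; rfl
  rw [h, aP]
  exact listProd_le_listProd (fun g => (ha g).1.le) (fun g => (ha g).2.le) w

private lemma x_facts {a : Alph m n → ℝ} {b : Fin m → ℝ} {B Alo : ℝ}
    (hb : ∀ j, 0 < b j ∧ b j < 1) (hbB : ∀ j, b j ≤ B) (hB0 : 0 ≤ B)
    (ha : ∀ g, 0 < a g ∧ a g < b g.1) (hAlo : 0 < Alo) (hAloa : ∀ g, Alo ≤ a g)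
    {M k : ℕ} (hM : B ^ M < Alo) (hk : 1 ≤ k) (w : List (Alph m n)) (hlen : w.length = k) :
    0 < aP a w / bP b (w.map Sigma.fst) ∧ aP a w / bP b (w.map Sigma.fst) ≤ 1 ∧
      B ^ (M * k) < aP a w / bP b (w.map Sigma.fst) := by
  have hb0 : ∀ j, 0 < b j := fun j => (hb j).1
  have hbpos : 0 < bP b (w.map Sigma.fst) := bP_pos hb0 _
  have hapos : 0 < aP a w := listProd_pos (fun g => (ha g).1) w
  have hble1 : bP b (w.map Sigma.fst) ≤ 1 :=
    bP_le_one (fun j => (hb j).1.le) (fun j => (hb j).2.le) _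
  refine ⟨div_pos hapos hbpos, (div_le_one hbpos).2 (aP_le_bPy ha w), ?_⟩
  have h1 : Alo ^ k ≤ aP a w := by
    have h2 := pow_le_listProd hAlo.le hAloa w
    rw [hlen] at h2
    exact h2
  calc B ^ (M * k) = (B ^ M) ^ k := by rw [pow_mul]
    _ < Alo ^ k := pow_lt_pow_left₀ hM (pow_nonneg hB0 M) (by omega)
    _ ≤ aP a w := h1
    _ ≤ aP a w / bP b (w.map Sigma.fst) := by
        rw [le_div_iff₀ hbpos]
        exact mul_le_of_le_one_right hapos.le hble1

private lemma Psi_char {a : Alph m n → ℝ} {b : Fin m → ℝ} {B Alo : ℝ}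
    (hb : ∀ j, 0 < b j ∧ b j < 1) (hbB : ∀ j, b j ≤ B) (hB0 : 0 ≤ B)
    (ha : ∀ g, 0 < a g ∧ a g < b g.1) (hAlo : 0 < Alo) (hAloa : ∀ g, Alo ≤ a g)
    {M k : ℕ} (hM : B ^ M < Alo) (hk : 1 ≤ k) (w : List (Alph m n)) (τ : List (Fin m)) :
    (w, τ) ∈ Psi a b k ↔
      w.length = k ∧ τ ∈ SecF b (M * k) (aP a w / bP b (w.map Sigma.fst)) := by
  have hb0 : ∀ j, 0 < b j := fun j => (hb j).1
  have hbpos : 0 < bP b (w.map Sigma.fst) := bP_pos hb0 _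
  have hPsi : (w, τ) ∈ Psi a b k ↔ (w.length = k ∧ 1 ≤ τ.length ∧
      aP a w ≤ bP b (w.map Sigma.fst ++ τ).dropLast ∧
      bP b (w.map Sigma.fst ++ τ) < aP a w) := by
    simp [Psi, sy]
  rw [hPsi]
  constructor
  · rintro ⟨hlen, hτlen, h1, h2⟩
    obtain ⟨hx0, hx1, hBN⟩ := x_facts hb hbB hB0 ha hAlo hAloa hM hk w hlen
    have hτne : τ ≠ [] := by
      intro h; rw [h] at hτlen; simp at hτlen
    refine ⟨hlen, (mem_SecF_iff hb0 (fun j => (hb j).2) hbB hx0 hx1 hBN).2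
      ⟨hτne, ?_, ?_⟩⟩
    · rw [lt_div_iff₀ hbpos, mul_comm]
      rw [bP_append] at h2; exact h2
    · rw [List.dropLast_append_of_ne_nil hτne, bP_append] at h1
      rw [div_le_iff₀ hbpos, mul_comm]; exact h1
  · rintro ⟨hlen, hmem⟩
    obtain ⟨hx0, hx1, hBN⟩ := x_facts hb hbB hB0 ha hAlo hAloa hM hk w hlen
    obtain ⟨hτne, hlt, hle⟩ :=
      (mem_SecF_iff hb0 (fun j => (hb j).2) hbB hx0 hx1 hBN).1 hmem
    refine ⟨hlen, List.length_pos_iff.2 hτne, ?_, ?_⟩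
    · rw [List.dropLast_append_of_ne_nil hτne, bP_append]
      rw [div_le_iff₀ hbpos, mul_comm] at hle; exact hle
    · rw [bP_append]
      rw [lt_div_iff₀ hbpos, mul_comm] at hlt; exact hlt

private lemma Ih_eq {a : Alph m n → ℝ} {b : Fin m → ℝ} {B Alo : ℝ} (p : Alph m n → ℝ)
    (r t : ℝ)
    (hb : ∀ j, 0 < b j ∧ b j < 1) (hbB : ∀ j, b j ≤ B) (hB0 : 0 ≤ B)
    (ha : ∀ g, 0 < a g ∧ a g < b g.1) (hAlo : 0 < Alo) (hAloa : ∀ g, Alo ≤ a g)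
    {M k : ℕ} (hM : B ^ M < Alo) (hk : 1 ≤ k) :
    Ih a b p r k t = ∑ u : Fin k → Alph m n,
      ∑ τ ∈ SecF b (M * k) (aP a (List.ofFn u) / bP b ((List.ofFn u).map Sigma.fst)),
        Er a p r (List.ofFn u, τ) ^ t := by
  classical
  set F := (Finset.univ : Finset (Fin k → Alph m n)).biUnion (fun u =>
      (SecF b (M * k) (aP a (List.ofFn u) / bP b ((List.ofFn u).map Sigma.fst))).image
        fun τ => ((List.ofFn u, τ) : Wd m n)) with hF
  have key : Psi a b k = ↑F := by
    ext σ
    simp only [hF, Finset.coe_biUnion, Finset.coe_univ, Set.mem_iUnion, Finset.mem_coe,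
      Finset.mem_image, Set.mem_univ, Set.iUnion_true]
    constructor
    · intro hσ
      obtain ⟨w, τ⟩ := σ
      obtain ⟨hlen, hmem⟩ := (Psi_char hb hbB hB0 ha hAlo hAloa hM hk w τ).1 hσ
      subst hlen
      refine ⟨w.get, τ, ?_, ?_⟩
      · rw [List.ofFn_get]; exact hmem
      · rw [List.ofFn_get]
    · rintro ⟨u, τ, hτ, rfl⟩
      exact (Psi_char hb hbB hB0 ha hAlo hAloa hM hk _ _).2 ⟨by simp, hτ⟩
  have hdisj : ((Finset.univ : Finset (Fin k → Alph m n)) : Set (Fin k → Alph m n)).PairwiseDisjoint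
      (fun u : Fin k → Alph m n =>
        (SecF b (M * k) (aP a (List.ofFn u) / bP b ((List.ofFn u).map Sigma.fst))).image
          fun τ => ((List.ofFn u, τ) : Wd m n)) := by
    intro u _ v _ huv
    refine Finset.disjoint_left.2 fun σ h1 h2 => ?_
    obtain ⟨τ1, -, rfl⟩ := Finset.mem_image.1 h1
    obtain ⟨τ2, -, heq⟩ := Finset.mem_image.1 h2
    exact huv (List.ofFn_injective (congrArg Prod.fst heq).symm)
  calc Ih a b p r k t = ∑' σ : ↥(Psi a b k), Er a p r σ.1 ^ t := rfl
    _ = ∑' σ : ↥(↑F : Set (Wd m n)), Er a p r σ.1 ^ t := by rw [key]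
    _ = ∑ σ ∈ F, Er a p r σ ^ t := Finset.tsum_subtype' F fun σ => Er a p r σ ^ t
    _ = ∑ u : Fin k → Alph m n,
          ∑ τ ∈ SecF b (M * k) (aP a (List.ofFn u) / bP b ((List.ofFn u).map Sigma.fst)),
            Er a p r (List.ofFn u, τ) ^ t := by
        rw [hF, Finset.sum_biUnion hdisj]
        exact Finset.sum_congr rfl fun u _ =>
          Finset.sum_image fun τ1 _ τ2 _ h => congrArg Prod.snd h

end PsiAux

section BetaAux

variable {m : ℕ}

private lemma exists_beta [Nonempty (Fin m)] {b : Fin m → ℝ} {B : ℝ}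
    (hb : ∀ j, 0 < b j ∧ b j < 1) (hbB : ∀ j, b j ≤ B) (hB1 : B < 1)
    (w : Fin m → ℝ) (hw : ∀ j, 0 < w j) :
    ∃ β : ℝ, ∑ j, w j * b j ^ (β : ℝ) = 1 := by
  classical
  set f : ℝ → ℝ := fun β => ∑ j, w j * b j ^ (β : ℝ) with hfdef
  have hB0 : 0 < B := lt_of_lt_of_le (hb (Classical.arbitrary _)).1 (hbB _)
  have hcont : Continuous f := by
    have : f = fun β => ∑ j, w j * Real.exp (Real.log (b j) * β) := by
      funext β
      exact Finset.sum_congr rfl fun j _ => by rw [Real.rpow_def_of_pos (hb j).1]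
    rw [this]
    exact continuous_finset_sum _ fun j _ =>
      continuous_const.mul (Real.continuous_exp.comp (continuous_const.mul continuous_id))
  -- a point where f ≥ 1
  obtain ⟨j0⟩ := ‹Nonempty (Fin m)›
  set β1 : ℝ := -Real.log (w j0) / Real.log (b j0) with hβ1
  have hlogb : Real.log (b j0) < 0 := Real.log_neg (hb j0).1 (hb j0).2
  have hf1 : 1 ≤ f β1 := by
    have hterm : w j0 * b j0 ^ (β1 : ℝ) = 1 := by
      rw [Real.rpow_def_of_pos (hb j0).1, hβ1]
      rw [mul_div_assoc']
      rw [mul_comm (Real.log (b j0)) (-Real.log (w j0)), mul_div_assoc]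
      rw [div_self hlogb.ne]
      rw [mul_one, Real.exp_neg, Real.exp_log (hw j0)]
      rw [mul_inv_cancel₀ (hw j0).ne']
    calc (1 : ℝ) = w j0 * b j0 ^ (β1 : ℝ) := hterm.symm
      _ ≤ f β1 := Finset.single_le_sum
          (fun j _ => mul_nonneg (hw j).le (Real.rpow_nonneg (hb j).1.le _))
          (Finset.mem_univ j0)
  -- a point where f ≤ 1
  set S : ℝ := ∑ j, w j with hS
  have hS0 : 0 < S := Finset.sum_pos (fun j _ => hw j) Finset.univ_nonempty
  have hlogB : Real.log B < 0 := Real.log_neg hB0 hB1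
  set β2 : ℝ := max 0 (Real.log S / (-Real.log B)) with hβ2
  have hβ2nn : 0 ≤ β2 := le_max_left _ _
  have hf2 : f β2 ≤ 1 := by
    have hstep : ∀ j, w j * b j ^ (β2 : ℝ) ≤ w j * B ^ (β2 : ℝ) := by
      intro j
      exact mul_le_mul_of_nonneg_left
        (Real.rpow_le_rpow (hb j).1.le (hbB j) hβ2nn) (hw j).le
    have h1 : f β2 ≤ S * B ^ (β2 : ℝ) := by
      rw [hS, Finset.sum_mul]
      exact Finset.sum_le_sum fun j _ => hstep j
    have h2 : S * B ^ (β2 : ℝ) ≤ 1 := by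
      rcases le_or_gt S 1 with hS1 | hS1
      · have hBle : B ^ (β2 : ℝ) ≤ 1 := by
          simpa using Real.rpow_le_rpow_of_exponent_ge hB0 hB1.le hβ2nn
        calc S * B ^ (β2 : ℝ) ≤ 1 * 1 :=
              mul_le_mul hS1 hBle (Real.rpow_nonneg hB0.le _) zero_le_one
          _ = 1 := by norm_num
      · have hlogS : 0 < Real.log S := Real.log_pos hS1
        have hb2 : β2 = Real.log S / (-Real.log B) := by
          rw [hβ2, max_eq_right]
          exact div_nonneg hlogS.le (by linarith)
        have : B ^ (β2 : ℝ) = Real.exp (-Real.log S) := by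
          rw [Real.rpow_def_of_pos hB0, hb2]
          congr 1
          rw [div_neg, mul_neg, mul_div_assoc', mul_comm,
            mul_div_assoc, div_self hlogB.ne, mul_one]
        rw [this, Real.exp_neg, Real.exp_log hS0]
        rw [mul_inv_cancel₀ hS0.ne']
    exact h1.trans h2
  -- IVT
  have := intermediate_value_uIcc (a := β1) (b := β2) (f := f) hcont.continuousOn
  have h1mem : (1 : ℝ) ∈ Set.uIcc (f β1) (f β2) := by
    rw [Set.mem_uIcc]
    rcases le_total (f β1) (f β2) with h | h
    · left; constructor <;> linarith
    · right; constructor <;> linarith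
  obtain ⟨β, -, hβ⟩ := this h1mem
  exact ⟨β, hβ⟩

private lemma beta_strictAnti [Nonempty (Fin m)] {b : Fin m → ℝ}
    (hb : ∀ j, 0 < b j ∧ b j < 1) (w : Fin m → ℝ) (hw : ∀ j, 0 < w j) :
    StrictAnti (fun β : ℝ => ∑ j, w j * b j ^ (β : ℝ)) := by
  intro β γ h
  exact Finset.sum_lt_sum_of_nonempty Finset.univ_nonempty fun j _ =>
    mul_lt_mul_of_pos_left
      (Real.rpow_lt_rpow_of_exponent_gt (hb j).1 (hb j).2 h) (hw j)

end BetaAux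

section MasterAux

variable {m : ℕ} {n : Fin m → ℕ}

private lemma xfactor (A Bb : ℝ) (hA : 0 < A) (hB : 0 < Bb) (β s : ℝ) :
    A ^ (s : ℝ) * (A / Bb) ^ (-β : ℝ) = A ^ (s - β) * Bb ^ (β : ℝ) := by
  rw [Real.div_rpow hA.le hB.le, Real.rpow_sub hA, Real.rpow_neg hA.le,
    Real.rpow_neg hB.le, div_eq_mul_inv, div_eq_mul_inv, inv_inv]
  ring

private lemma master
    (hm : 2 ≤ m) (hn : ∀ j, 1 ≤ n j)
    (a : Alph m n → ℝ) (b : Fin m → ℝ)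
    (hab : ∀ g : Alph m n, 0 < a g ∧ a g < b g.1 ∧ b g.1 < 1)
    (p : Alph m n → ℝ) (hp : ∀ g, 0 < p g) (hp1 : ∑ g : Alph m n, p g = 1)
    (r : ℝ) (hr : 0 < r) (t : ℝ) :
    ∃ K c C : ℝ, 0 < K ∧ 0 < c ∧ c ≤ 1 ∧ 1 ≤ C ∧
      (0 ≤ t → ∀ k : ℕ, 1 ≤ k →
        c * K ^ k ≤ Ih a b p r k t ∧ Ih a b p r k t ≤ C * K ^ k) ∧
      (t = 0 → 2 ≤ K) ∧ (t = 1 → K < 1) := by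
  classical
  haveI hmne : Nonempty (Fin m) := ⟨⟨0, by omega⟩⟩
  haveI hnne : ∀ j, Nonempty (Fin (n j)) := fun j => ⟨⟨0, by have := hn j; omega⟩⟩
  haveI hane : Nonempty (Alph m n) := ⟨⟨Classical.arbitrary _, Classical.arbitrary _⟩⟩
  have hb : ∀ j, 0 < b j ∧ b j < 1 := by
    intro j
    obtain ⟨i⟩ := hnne j
    obtain ⟨h1, h2, h3⟩ := hab ⟨j, i⟩
    exact ⟨h1.trans h2, h3⟩
  have hb0 : ∀ j, 0 < b j := fun j => (hb j).1
  have ha : ∀ g, 0 < a g ∧ a g < b g.1 := fun g => ⟨(hab g).1, (hab g).2.1⟩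
  set B := Finset.univ.sup' Finset.univ_nonempty b with hBdef
  have hbB : ∀ j, b j ≤ B := fun j => Finset.le_sup' b (Finset.mem_univ j)
  have hB1 : B < 1 := by
    obtain ⟨j, -, hj⟩ := Finset.exists_mem_eq_sup' Finset.univ_nonempty b
    rw [hBdef, hj]; exact (hb j).2
  have hB0 : 0 < B := lt_of_lt_of_le (hb (Classical.arbitrary _)).1 (hbB _)
  set blo := Finset.univ.inf' Finset.univ_nonempty b with hblodef
  have hblo : ∀ j, blo ≤ b j := fun j => Finset.inf'_le b (Finset.mem_univ j)
  have hblo0 : 0 < blo := by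
    obtain ⟨j, -, hj⟩ := Finset.exists_mem_eq_inf' Finset.univ_nonempty b
    rw [hblodef, hj]; exact (hb j).1
  set Alo := Finset.univ.inf' Finset.univ_nonempty a with hAlodef
  have hAloa : ∀ g, Alo ≤ a g := fun g => Finset.inf'_le a (Finset.mem_univ g)
  have hAlo0 : 0 < Alo := by
    obtain ⟨g, -, hg⟩ := Finset.exists_mem_eq_inf' Finset.univ_nonempty a
    rw [hAlodef, hg]; exact (ha g).1
  obtain ⟨M, hM⟩ := exists_pow_lt_of_lt_one hAlo0 hB1
  have hq : ∀ j, 0 < qf p j := fun j =>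
    Finset.sum_pos (fun i _ => hp _) Finset.univ_nonempty
  have hq1 : ∑ j, qf p j = 1 := by
    rw [← hp1, ← Finset.univ_sigma_univ, Finset.sum_sigma]; rfl
  set wq : Fin m → ℝ := fun j => qf p j ^ (t : ℝ) with hwq
  have hwq0 : ∀ j, 0 < wq j := fun j => Real.rpow_pos_of_pos (hq j) t
  obtain ⟨β, hβ⟩ := exists_beta hb hbB hB1 wq hwq0
  set K := ∑ g : Alph m n, p g ^ (t : ℝ) * (a g ^ (r * t - β) * b g.1 ^ (β : ℝ))
    with hK
  have hKpos : 0 < K :=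
    Finset.sum_pos (fun g _ => mul_pos (Real.rpow_pos_of_pos (hp g) _)
      (mul_pos (Real.rpow_pos_of_pos (ha g).1 _)
        (Real.rpow_pos_of_pos (hb g.1).1 _))) Finset.univ_nonempty
  set c := min 1 (blo ^ (-β : ℝ)) with hc
  set C := max 1 (blo ^ (-β : ℝ)) with hC
  have hblorpow : 0 < blo ^ (-β : ℝ) := Real.rpow_pos_of_pos hblo0 _
  refine ⟨K, c, C, hKpos, lt_min one_pos hblorpow, min_le_left _ _,
    le_max_left _ _, ?_, ?_, ?_⟩
  · -- main bounds
    intro ht k hk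
    rw [Ih_eq p r t hb hbB hB0.le ha hAlo0 hAloa hM hk]
    set x : (Fin k → Alph m n) → ℝ := fun u =>
      aP a (List.ofFn u) / bP b ((List.ofFn u).map Sigma.fst) with hx
    set P : (Fin k → Alph m n) → ℝ := fun u =>
      pP p (List.ofFn u) ^ (t : ℝ) * (aP a (List.ofFn u) ^ (r : ℝ)) ^ (t : ℝ) with hP
    have hpP0 : ∀ u : Fin k → Alph m n, 0 < pP p (List.ofFn u) :=
      fun u => listProd_pos hp _
    have haP0 : ∀ u : Fin k → Alph m n, 0 < aP a (List.ofFn u) :=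
      fun u => listProd_pos (fun g => (ha g).1) _
    have hqP0 : ∀ τ, 0 < qP p τ := fun τ => listProd_pos hq _
    have hP0 : ∀ u, 0 < P u := fun u =>
      mul_pos (Real.rpow_pos_of_pos (hpP0 u) _)
        (Real.rpow_pos_of_pos (Real.rpow_pos_of_pos (haP0 u) _) _)
    have hsum_inner : ∀ u : Fin k → Alph m n,
        ∑ τ ∈ SecF b (M * k) (x u), Er a p r (List.ofFn u, τ) ^ (t : ℝ)
          = P u * ∑ τ ∈ SecF b (M * k) (x u), qP p τ ^ (t : ℝ) := by
      intro u
      rw [Finset.mul_sum]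
      refine Finset.sum_congr rfl fun τ _ => ?_
      show (pP p (List.ofFn u) * qP p τ * aP a (List.ofFn u) ^ (r : ℝ)) ^ (t : ℝ) = _
      rw [Real.mul_rpow (mul_nonneg (hpP0 u).le (hqP0 τ).le)
        (Real.rpow_nonneg (haP0 u).le _),
        Real.mul_rpow (hpP0 u).le (hqP0 τ).le, hP]
      ring
    have hflow : ∀ u : Fin k → Alph m n,
        ∑ τ ∈ SecF b (M * k) (x u), qP p τ ^ (t : ℝ) * bP b τ ^ (β : ℝ) = 1 := by
      intro u
      obtain ⟨hx0, hx1, hBN⟩ := x_facts hb hbB hB0.le ha hAlo0 hAloa hM hk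
        (List.ofFn u) (by simp)
      have hs := sum_SecF hb0 (fun j => (hb j).2) hbB
        (fun j => qf p j ^ (t : ℝ) * b j ^ (β : ℝ)) hβ hx0 hx1 hBN
      rw [← hs]
      refine Finset.sum_congr rfl fun τ _ => ?_
      rw [listProd_mul, ← listProd_rpow (fun j => (hq j).le),
        ← listProd_rpow (fun j => (hb j).1.le)]
      rfl
    have hbound : ∀ u : Fin k → Alph m n, ∀ τ ∈ SecF b (M * k) (x u),
        c * x u ^ (-β : ℝ) ≤ bP b τ ^ (-β : ℝ) ∧
          bP b τ ^ (-β : ℝ) ≤ C * x u ^ (-β : ℝ) := by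
      intro u τ hτ
      obtain ⟨hx0, hx1, hBN⟩ := x_facts hb hbB hB0.le ha hAlo0 hAloa hM hk
        (List.ofFn u) (by simp)
      obtain ⟨hτne, hlt, hle⟩ :=
        (mem_SecF_iff hb0 (fun j => (hb j).2) hbB hx0 hx1 hBN).1 hτ
      have hbτ0 : 0 < bP b τ := bP_pos hb0 τ
      have hxblo0 : 0 < x u * blo := mul_pos hx0 hblo0
      have hbτ_lo : x u * blo ≤ bP b τ := by
        conv_rhs => rw [← List.dropLast_append_getLast hτne]
        rw [bP_append]
        have hsing : bP b [τ.getLast hτne] = b (τ.getLast hτne) := by simp [bP]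
        rw [hsing]
        exact mul_le_mul hle (hblo _) hblo0.le (bP_pos hb0 _).le
      have hbτ_hi : bP b τ ≤ x u := hlt.le
      have hxrpow0 : 0 ≤ x u ^ (-β : ℝ) := Real.rpow_nonneg hx0.le _
      have hmulrpow : (x u * blo) ^ (-β : ℝ) = x u ^ (-β : ℝ) * blo ^ (-β : ℝ) :=
        Real.mul_rpow hx0.le hblo0.le
      rcases le_or_gt 0 β with hβnn | hβneg
      · constructor
        · calc c * x u ^ (-β : ℝ) ≤ 1 * x u ^ (-β : ℝ) :=
              mul_le_mul_of_nonneg_right (min_le_left _ _) hxrpow0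
            _ = x u ^ (-β : ℝ) := one_mul _
            _ ≤ bP b τ ^ (-β : ℝ) :=
              Real.rpow_le_rpow_of_nonpos hbτ0 hbτ_hi (neg_nonpos.2 hβnn)
        · calc bP b τ ^ (-β : ℝ) ≤ (x u * blo) ^ (-β : ℝ) :=
              Real.rpow_le_rpow_of_nonpos hxblo0 hbτ_lo (neg_nonpos.2 hβnn)
            _ = x u ^ (-β : ℝ) * blo ^ (-β : ℝ) := hmulrpow
            _ ≤ x u ^ (-β : ℝ) * C :=
              mul_le_mul_of_nonneg_left (le_max_right _ _) hxrpow0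
            _ = C * x u ^ (-β : ℝ) := mul_comm _ _
      · constructor
        · calc c * x u ^ (-β : ℝ) ≤ blo ^ (-β : ℝ) * x u ^ (-β : ℝ) :=
              mul_le_mul_of_nonneg_right (min_le_right _ _) hxrpow0
            _ = (x u * blo) ^ (-β : ℝ) := by rw [hmulrpow, mul_comm]
            _ ≤ bP b τ ^ (-β : ℝ) :=
              Real.rpow_le_rpow hxblo0.le hbτ_lo (by linarith)
        · calc bP b τ ^ (-β : ℝ) ≤ x u ^ (-β : ℝ) :=
              Real.rpow_le_rpow hbτ0.le hbτ_hi (by linarith)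
            _ = 1 * x u ^ (-β : ℝ) := (one_mul _).symm
            _ ≤ C * x u ^ (-β : ℝ) :=
              mul_le_mul_of_nonneg_right (le_max_left _ _) hxrpow0
    have hqsum : ∀ u : Fin k → Alph m n,
        c * x u ^ (-β : ℝ) ≤ (∑ τ ∈ SecF b (M * k) (x u), qP p τ ^ (t : ℝ)) ∧
        (∑ τ ∈ SecF b (M * k) (x u), qP p τ ^ (t : ℝ)) ≤ C * x u ^ (-β : ℝ) := by
      intro u
      have hsplit : ∀ τ, qP p τ ^ (t : ℝ)
          = (qP p τ ^ (t : ℝ) * bP b τ ^ (β : ℝ)) * bP b τ ^ (-β : ℝ) := by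
        intro τ
        rw [mul_assoc, ← Real.rpow_add (bP_pos hb0 τ), add_neg_cancel,
          Real.rpow_zero, mul_one]
      have hfl0 : ∀ τ, 0 ≤ qP p τ ^ (t : ℝ) * bP b τ ^ (β : ℝ) := fun τ =>
        mul_nonneg (Real.rpow_nonneg (hqP0 τ).le _)
          (Real.rpow_nonneg (bP_pos hb0 τ).le _)
      constructor
      · calc c * x u ^ (-β : ℝ)
            = (∑ τ ∈ SecF b (M * k) (x u),
                qP p τ ^ (t : ℝ) * bP b τ ^ (β : ℝ)) * (c * x u ^ (-β : ℝ)) := by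
              rw [hflow u, one_mul]
          _ = ∑ τ ∈ SecF b (M * k) (x u),
                (qP p τ ^ (t : ℝ) * bP b τ ^ (β : ℝ)) * (c * x u ^ (-β : ℝ)) :=
              Finset.sum_mul _ _ _
          _ ≤ ∑ τ ∈ SecF b (M * k) (x u), qP p τ ^ (t : ℝ) := by
              refine Finset.sum_le_sum fun τ hτ => ?_
              exact le_trans (mul_le_mul_of_nonneg_left (hbound u τ hτ).1 (hfl0 τ))
                (le_of_eq (hsplit τ).symm)
      · calc (∑ τ ∈ SecF b (M * k) (x u), qP p τ ^ (t : ℝ))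
            ≤ ∑ τ ∈ SecF b (M * k) (x u),
                (qP p τ ^ (t : ℝ) * bP b τ ^ (β : ℝ)) * (C * x u ^ (-β : ℝ)) := by
              refine Finset.sum_le_sum fun τ hτ => ?_
              exact le_trans (le_of_eq (hsplit τ))
                (mul_le_mul_of_nonneg_left (hbound u τ hτ).2 (hfl0 τ))
          _ = (∑ τ ∈ SecF b (M * k) (x u),
                qP p τ ^ (t : ℝ) * bP b τ ^ (β : ℝ)) * (C * x u ^ (-β : ℝ)) :=
              (Finset.sum_mul _ _ _).symm
          _ = C * x u ^ (-β : ℝ) := by rw [hflow u, one_mul]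
    have hKk : ∑ u : Fin k → Alph m n, P u * x u ^ (-β : ℝ) = K ^ k := by
      have hterm : ∀ u : Fin k → Alph m n, P u * x u ^ (-β : ℝ)
          = ∏ i : Fin k, (p (u i) ^ (t : ℝ)
              * (a (u i) ^ (r * t - β) * b (u i).1 ^ (β : ℝ))) := by
        intro u
        have hpP : pP p (List.ofFn u) = ∏ i : Fin k, p (u i) := by
          rw [pP, List.map_ofFn, List.prod_ofFn]; rfl
        have haP : aP a (List.ofFn u) = ∏ i : Fin k, a (u i) := by
          rw [aP, List.map_ofFn, List.prod_ofFn]; rfl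
        have hbP : bP b ((List.ofFn u).map Sigma.fst) = ∏ i : Fin k, b (u i).1 := by
          rw [bP, List.map_ofFn, List.map_ofFn, List.prod_ofFn]; rfl
        have hApos : 0 < ∏ i : Fin k, a (u i) :=
          Finset.prod_pos fun i _ => (ha (u i)).1
        have hBpos : 0 < ∏ i : Fin k, b (u i).1 :=
          Finset.prod_pos fun i _ => (hb (u i).1).1
        have e1 : ∏ i : Fin k, p (u i) ^ (t : ℝ)
            = (∏ i : Fin k, p (u i)) ^ (t : ℝ) :=
          (finProd_rpow _ (fun i => (hp (u i)).le) t).symm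
        have e2 : ∏ i : Fin k, a (u i) ^ (r * t - β)
            = (∏ i : Fin k, a (u i)) ^ (r * t - β) :=
          (finProd_rpow _ (fun i => (ha (u i)).1.le) _).symm
        have e3 : ∏ i : Fin k, b (u i).1 ^ (β : ℝ)
            = (∏ i : Fin k, b (u i).1) ^ (β : ℝ) :=
          (finProd_rpow _ (fun i => (hb (u i).1).1.le) _).symm
        rw [hP, hx]
        simp only [Finset.prod_mul_distrib, e1, e2, e3, hpP, haP, hbP]
        rw [← Real.rpow_mul hApos.le]
        rw [mul_assoc]
        congr 1
        exact xfactor _ _ hApos hBpos β (r * t)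
      rw [Finset.sum_congr rfl fun u _ => hterm u]
      have hps := Finset.prod_univ_sum (fun _ : Fin k => (Finset.univ : Finset (Alph m n)))
        (fun _ g => p g ^ (t : ℝ) * (a g ^ (r * t - β) * b g.1 ^ (β : ℝ)))
      rw [Fintype.piFinset_univ] at hps
      rw [← hps]
      rw [Finset.prod_const]
      rw [← hK]
      congr 1
      simp
    constructor
    · rw [← hKk, Finset.mul_sum]
      refine Finset.sum_le_sum fun u _ => ?_
      rw [hsum_inner u]
      calc c * (P u * x u ^ (-β : ℝ)) = P u * (c * x u ^ (-β : ℝ)) := by ring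
        _ ≤ P u * ∑ τ ∈ SecF b (M * k) (x u), qP p τ ^ (t : ℝ) :=
          mul_le_mul_of_nonneg_left (hqsum u).1 (hP0 u).le
    · rw [← hKk, Finset.mul_sum]
      refine Finset.sum_le_sum fun u _ => ?_
      rw [hsum_inner u]
      calc P u * ∑ τ ∈ SecF b (M * k) (x u), qP p τ ^ (t : ℝ)
          ≤ P u * (C * x u ^ (-β : ℝ)) :=
            mul_le_mul_of_nonneg_left (hqsum u).2 (hP0 u).le
        _ = C * (P u * x u ^ (-β : ℝ)) := by ring
  · -- t = 0
    intro ht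
    subst ht
    have hβ' : ∑ j, b j ^ (β : ℝ) = 1 := by
      have : ∀ j : Fin m, wq j * b j ^ (β : ℝ) = b j ^ (β : ℝ) := by
        intro j; rw [hwq]; simp [Real.rpow_zero]
      rw [← Finset.sum_congr rfl fun j _ => this j]
      exact hβ
    have hm2 : (2 : ℝ) ≤ (m : ℝ) := by exact_mod_cast hm
    have hβnn : 0 ≤ β := by
      by_contra hneg
      push_neg at hneg
      have hgt : ∀ j : Fin m, 1 < b j ^ (β : ℝ) := fun j =>
        (Real.one_lt_rpow_iff_of_pos (hb j).1).2 (Or.inr ⟨(hb j).2, hneg⟩)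
      have hsum : ∑ j : Fin m, (1 : ℝ) < ∑ j, b j ^ (β : ℝ) :=
        Finset.sum_lt_sum_of_nonempty Finset.univ_nonempty fun j _ => hgt j
      rw [hβ'] at hsum
      simp only [Finset.sum_const, Finset.card_univ, Fintype.card_fin, nsmul_eq_mul,
        mul_one] at hsum
      linarith
    have hcard : (2 : ℝ) ≤ (Fintype.card (Alph m n) : ℝ) := by
      have h1 : m ≤ Fintype.card (Alph m n) := by
        rw [Fintype.card_sigma]
        calc m = ∑ _j : Fin m, 1 := by simp
          _ ≤ ∑ j : Fin m, Fintype.card (Fin (n j)) := by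
            refine Finset.sum_le_sum fun j _ => ?_
            simp [hn j]
      have : (m : ℝ) ≤ (Fintype.card (Alph m n) : ℝ) := by exact_mod_cast h1
      linarith
    calc (2 : ℝ) ≤ (Fintype.card (Alph m n) : ℝ) := hcard
      _ = ∑ _g : Alph m n, (1 : ℝ) := by simp
      _ ≤ K := by
        rw [hK]
        refine Finset.sum_le_sum fun g _ => ?_
        have h1 : p g ^ (0 : ℝ) = 1 := Real.rpow_zero _
        have h2 : r * 0 - β = -β := by ring
        rw [h1, h2, one_mul, Real.rpow_neg (ha g).1.le, ← div_eq_inv_mul]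
        exact (one_le_div (Real.rpow_pos_of_pos (ha g).1 β)).2
          (Real.rpow_le_rpow (ha g).1.le (ha g).2.le hβnn)
  · -- t = 1
    intro ht
    subst ht
    have hβ1 : ∑ j, qf p j * b j ^ (β : ℝ) = 1 := by
      have : ∀ j : Fin m, wq j * b j ^ (β : ℝ) = qf p j * b j ^ (β : ℝ) := by
        intro j; rw [hwq]; simp [Real.rpow_one]
      rw [← Finset.sum_congr rfl fun j _ => this j]
      exact hβ
    have hβ0 : β = 0 := by
      have h2 : (fun β : ℝ => ∑ j, qf p j * b j ^ (β : ℝ)) β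
          = (fun β : ℝ => ∑ j, qf p j * b j ^ (β : ℝ)) 0 := by
        simp only
        rw [hβ1]
        symm
        simp only [Real.rpow_zero, mul_one]
        exact hq1
      exact (beta_strictAnti hb (qf p) hq).injective h2
    have hKeq : K = ∑ g : Alph m n, p g * a g ^ (r : ℝ) := by
      rw [hK, hβ0]
      refine Finset.sum_congr rfl fun g _ => ?_
      rw [Real.rpow_one, Real.rpow_zero, mul_one]
      congr 1
      ring
    rw [hKeq, ← hp1]
    refine Finset.sum_lt_sum_of_nonempty Finset.univ_nonempty fun g _ => ?_
    have ha1 : a g < 1 := (ha g).2.trans (hb g.1).2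
    have : a g ^ (r : ℝ) < 1 := Real.rpow_lt_one (ha g).1.le ha1 hr
    calc p g * a g ^ (r : ℝ) < p g * 1 := mul_lt_mul_of_pos_left this (hp g)
      _ = p g := mul_one _

end MasterAux

section CompareAux

variable {m : ℕ} {n : Fin m → ℕ}

private lemma pow_rpow_comm {A : ℝ} (hA : 0 ≤ A) (k : ℕ) (r : ℝ) :
    (A ^ k : ℝ) ^ (r : ℝ) = (A ^ (r : ℝ)) ^ k := by
  rw [← Real.rpow_natCast A k, ← Real.rpow_mul hA, mul_comm, Real.rpow_mul hA,
    Real.rpow_natCast]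

private lemma compare
    (hm : 2 ≤ m) (hn : ∀ j, 1 ≤ n j)
    (a : Alph m n → ℝ) (b : Fin m → ℝ)
    (hab : ∀ g : Alph m n, 0 < a g ∧ a g < b g.1 ∧ b g.1 < 1)
    (p : Alph m n → ℝ) (hp : ∀ g, 0 < p g) (hp1 : ∑ g : Alph m n, p g = 1)
    (r : ℝ) (hr : 0 < r) :
    ∃ δ ε : ℝ, 0 < δ ∧ δ ≤ ε ∧ ε < 1 ∧
      ∀ t t' : ℝ, 0 ≤ t → t ≤ t' → ∀ k : ℕ, 1 ≤ k →
        Ih a b p r k t * (δ ^ k) ^ (t' - t) ≤ Ih a b p r k t' ∧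
        Ih a b p r k t' ≤ Ih a b p r k t * (ε ^ k) ^ (t' - t) := by
  classical
  haveI hmne : Nonempty (Fin m) := ⟨⟨0, by omega⟩⟩
  haveI hnne : ∀ j, Nonempty (Fin (n j)) := fun j => ⟨⟨0, by have := hn j; omega⟩⟩
  haveI hane : Nonempty (Alph m n) := ⟨⟨Classical.arbitrary _, Classical.arbitrary _⟩⟩
  have hb : ∀ j, 0 < b j ∧ b j < 1 := by
    intro j
    obtain ⟨i⟩ := hnne j
    obtain ⟨h1, h2, h3⟩ := hab ⟨j, i⟩
    exact ⟨h1.trans h2, h3⟩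
  have hb0 : ∀ j, 0 < b j := fun j => (hb j).1
  have ha : ∀ g, 0 < a g ∧ a g < b g.1 := fun g => ⟨(hab g).1, (hab g).2.1⟩
  set B := Finset.univ.sup' Finset.univ_nonempty b with hBdef
  have hbB : ∀ j, b j ≤ B := fun j => Finset.le_sup' b (Finset.mem_univ j)
  have hB1 : B < 1 := by
    obtain ⟨j, -, hj⟩ := Finset.exists_mem_eq_sup' Finset.univ_nonempty b
    rw [hBdef, hj]; exact (hb j).2
  have hB0 : 0 < B := lt_of_lt_of_le (hb (Classical.arbitrary _)).1 (hbB _)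
  set Alo := Finset.univ.inf' Finset.univ_nonempty a with hAlodef
  have hAloa : ∀ g, Alo ≤ a g := fun g => Finset.inf'_le a (Finset.mem_univ g)
  have hAlo0 : 0 < Alo := by
    obtain ⟨g, -, hg⟩ := Finset.exists_mem_eq_inf' Finset.univ_nonempty a
    rw [hAlodef, hg]; exact (ha g).1
  obtain ⟨M, hM⟩ := exists_pow_lt_of_lt_one hAlo0 hB1
  set Ahi := Finset.univ.sup' Finset.univ_nonempty a with hAhidef
  have hAhia : ∀ g, a g ≤ Ahi := fun g => Finset.le_sup' a (Finset.mem_univ g)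
  have hAhi1 : Ahi < 1 := by
    obtain ⟨g, -, hg⟩ := Finset.exists_mem_eq_sup' Finset.univ_nonempty a
    rw [hAhidef, hg]; exact (ha g).2.trans (hb g.1).2
  have hAhi0 : 0 < Ahi := lt_of_lt_of_le (ha (Classical.arbitrary _)).1 (hAhia _)
  set plo := Finset.univ.inf' Finset.univ_nonempty p with hplodef
  have hplop : ∀ g, plo ≤ p g := fun g => Finset.inf'_le p (Finset.mem_univ g)
  have hplo0 : 0 < plo := by
    obtain ⟨g, -, hg⟩ := Finset.exists_mem_eq_inf' Finset.univ_nonempty p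
    rw [hplodef, hg]; exact hp g
  have hq : ∀ j, 0 < qf p j := fun j =>
    Finset.sum_pos (fun i _ => hp _) Finset.univ_nonempty
  have hq1 : ∑ j, qf p j = 1 := by
    rw [← hp1, ← Finset.univ_sigma_univ, Finset.sum_sigma]; rfl
  set qlo := Finset.univ.inf' Finset.univ_nonempty (qf p) with hqlodef
  have hqloq : ∀ j, qlo ≤ qf p j := fun j => Finset.inf'_le (qf p) (Finset.mem_univ j)
  have hqlo0 : 0 < qlo := by
    obtain ⟨j, -, hj⟩ := Finset.exists_mem_eq_inf' Finset.univ_nonempty (qf p)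
    rw [hqlodef, hj]; exact hq j
  have hp_le1 : ∀ g, p g ≤ 1 := by
    intro g
    rw [← hp1]
    exact Finset.single_le_sum (fun g _ => (hp g).le) (Finset.mem_univ g)
  have hq_le1 : ∀ j, qf p j ≤ 1 := by
    intro j
    rw [← hq1]
    exact Finset.single_le_sum (fun j _ => (hq j).le) (Finset.mem_univ j)
  have hplo1 : plo ≤ 1 := (hplop (Classical.arbitrary _)).trans (hp_le1 _)
  have hqlo1 : qlo ≤ 1 := (hqloq (Classical.arbitrary _)).trans (hq_le1 _)
  set δ := plo * qlo ^ M * Alo ^ (r : ℝ) with hδdef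
  set ε := Ahi ^ (r : ℝ) with hεdef
  have hε0 : 0 < ε := Real.rpow_pos_of_pos hAhi0 _
  have hδ0 : 0 < δ :=
    mul_pos (mul_pos hplo0 (pow_pos hqlo0 M)) (Real.rpow_pos_of_pos hAlo0 _)
  have hAloAhi : Alo ≤ Ahi := (hAloa (Classical.arbitrary _)).trans (hAhia _)
  have hδε : δ ≤ ε := by
    have h1 : plo * qlo ^ M ≤ 1 := by
      calc plo * qlo ^ M ≤ 1 * 1 :=
            mul_le_mul hplo1 (pow_le_one₀ hqlo0.le hqlo1) (pow_pos hqlo0 M).le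
              zero_le_one
        _ = 1 := by norm_num
    calc δ ≤ 1 * Ahi ^ (r : ℝ) :=
          mul_le_mul h1 (Real.rpow_le_rpow hAlo0.le hAloAhi hr.le)
            (Real.rpow_pos_of_pos hAlo0 _).le zero_le_one
      _ = ε := one_mul _
  have hε1 : ε < 1 := Real.rpow_lt_one hAhi0.le hAhi1 hr
  refine ⟨δ, ε, hδ0, hδε, hε1, ?_⟩
  intro t t' ht htt' k hk
  rw [Ih_eq p r t hb hbB hB0.le ha hAlo0 hAloa hM hk,
    Ih_eq p r t' hb hbB hB0.le ha hAlo0 hAloa hM hk]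
  have hE : ∀ (u : Fin k → Alph m n) (τ : List (Fin m)),
      τ ∈ SecF b (M * k) (aP a (List.ofFn u) / bP b ((List.ofFn u).map Sigma.fst)) →
      0 < Er a p r (List.ofFn u, τ) ∧ δ ^ k ≤ Er a p r (List.ofFn u, τ) ∧
        Er a p r (List.ofFn u, τ) ≤ ε ^ k := by
    intro u τ hτ
    have hpP0 : 0 < pP p (List.ofFn u) := listProd_pos hp _
    have haP0 : 0 < aP a (List.ofFn u) := listProd_pos (fun g => (ha g).1) _
    have hqP0 : 0 < qP p τ := listProd_pos hq _
    have hlen : (List.ofFn u).length = k := by simp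
    have hE0 : 0 < Er a p r (List.ofFn u, τ) :=
      mul_pos (mul_pos hpP0 hqP0) (Real.rpow_pos_of_pos haP0 _)
    refine ⟨hE0, ?_, ?_⟩
    · -- lower bound
      have h1 : plo ^ k ≤ pP p (List.ofFn u) := by
        have := pow_le_listProd hplo0.le hplop (List.ofFn u)
        rwa [hlen] at this
      have h2 : (qlo ^ M) ^ k ≤ qP p τ := by
        rw [← pow_mul]
        calc qlo ^ (M * k) ≤ qlo ^ τ.length :=
              pow_le_pow_of_le_one hqlo0.le hqlo1 (length_le_of_mem_SecF hτ)
          _ ≤ qP p τ := pow_le_listProd hqlo0.le hqloq τ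
      have h3 : (Alo ^ (r : ℝ)) ^ k ≤ aP a (List.ofFn u) ^ (r : ℝ) := by
        rw [← pow_rpow_comm hAlo0.le]
        refine Real.rpow_le_rpow (pow_nonneg hAlo0.le k) ?_ hr.le
        have := pow_le_listProd hAlo0.le hAloa (List.ofFn u)
        rwa [hlen] at this
      calc δ ^ k = plo ^ k * (qlo ^ M) ^ k * (Alo ^ (r : ℝ)) ^ k := by
            rw [hδdef, mul_pow, mul_pow]
        _ ≤ pP p (List.ofFn u) * qP p τ * aP a (List.ofFn u) ^ (r : ℝ) := by
            refine mul_le_mul (mul_le_mul h1 h2 (pow_nonneg (pow_nonneg hqlo0.le M) k)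
              hpP0.le) h3 (pow_nonneg (Real.rpow_pos_of_pos hAlo0 _).le k)
              (mul_pos hpP0 hqP0).le
        _ = Er a p r (List.ofFn u, τ) := rfl
    · -- upper bound
      have h1 : pP p (List.ofFn u) ≤ 1 := by
        have := listProd_le_pow (fun g => (hp g).le) hp_le1 (List.ofFn u)
        rwa [one_pow] at this
      have h2 : qP p τ ≤ 1 := by
        have := listProd_le_pow (fun j => (hq j).le) hq_le1 τ
        rwa [one_pow] at this
      have h3 : aP a (List.ofFn u) ^ (r : ℝ) ≤ (Ahi ^ (r : ℝ)) ^ k := by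
        rw [← pow_rpow_comm hAhi0.le]
        refine Real.rpow_le_rpow haP0.le ?_ hr.le
        have := listProd_le_pow (fun g => (ha g).1.le) hAhia (List.ofFn u)
        rwa [hlen] at this
      calc Er a p r (List.ofFn u, τ)
          = pP p (List.ofFn u) * qP p τ * aP a (List.ofFn u) ^ (r : ℝ) := rfl
        _ ≤ 1 * 1 * (Ahi ^ (r : ℝ)) ^ k := by
            refine mul_le_mul (mul_le_mul h1 h2 hqP0.le zero_le_one) h3
              (Real.rpow_nonneg haP0.le _) (by norm_num)
        _ = ε ^ k := by rw [one_mul, one_mul, hεdef]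
  have httnn : 0 ≤ t' - t := by linarith
  constructor
  · rw [Finset.sum_mul]
    refine Finset.sum_le_sum fun u _ => ?_
    rw [Finset.sum_mul]
    refine Finset.sum_le_sum fun τ hτ => ?_
    obtain ⟨hE0, hElo, hEhi⟩ := hE u τ hτ
    have hsplitE : Er a p r (List.ofFn u, τ) ^ (t' : ℝ)
        = Er a p r (List.ofFn u, τ) ^ (t : ℝ) * Er a p r (List.ofFn u, τ) ^ (t' - t) := by
      rw [← Real.rpow_add hE0]; congr 1; ring
    rw [hsplitE]
    refine mul_le_mul_of_nonneg_left ?_ (Real.rpow_nonneg hE0.le _)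
    exact Real.rpow_le_rpow (pow_pos hδ0 k).le hElo httnn
  · rw [Finset.sum_mul]
    refine Finset.sum_le_sum fun u _ => ?_
    rw [Finset.sum_mul]
    refine Finset.sum_le_sum fun τ hτ => ?_
    obtain ⟨hE0, hElo, hEhi⟩ := hE u τ hτ
    have hsplitE : Er a p r (List.ofFn u, τ) ^ (t' : ℝ)
        = Er a p r (List.ofFn u, τ) ^ (t : ℝ) * Er a p r (List.ofFn u, τ) ^ (t' - t) := by
      rw [← Real.rpow_add hE0]; congr 1; ring
    rw [hsplitE]
    refine mul_le_mul_of_nonneg_left ?_ (Real.rpow_nonneg hE0.le _)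
    exact Real.rpow_le_rpow hE0.le hEhi httnn

end CompareAux


theorem stmt14
    (m : ℕ) (hm : 2 ≤ m) (n : Fin m → ℕ) (hn : ∀ j, 1 ≤ n j)
    (a : Alph m n → ℝ) (b : Fin m → ℝ)
    (hab : ∀ g : Alph m n, 0 < a g ∧ a g < b g.1 ∧ b g.1 < 1)
    (p : Alph m n → ℝ) (hp : ∀ g, 0 < p g) (hp1 : ∑ g : Alph m n, p g = 1)
    (r : ℝ) (hr : 0 < r) :
    (∀ t : ℝ, 0 ≤ t →
      ∃ g : ℝ, Tendsto (fun k : ℕ => Real.log (Ih a b p r k t) / k) atTop (𝓝 g)) ∧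
    (∃! s : ℝ, 0 < s ∧
      Tendsto (fun k : ℕ => Real.log (Ih a b p r k (s / (s + r))) / k) atTop (𝓝 0)) ∧
    (∀ s : ℝ, 0 < s →
      Tendsto (fun k : ℕ => Real.log (Ih a b p r k (s / (s + r))) / k) atTop (𝓝 0) →
      ∃ C : ℝ, 1 ≤ C ∧ ∀ k l : ℕ, 1 ≤ k → 1 ≤ l →
        Ih a b p r k (s / (s + r)) / C ≤ Ih a b p r l (s / (s + r)) ∧
        Ih a b p r l (s / (s + r)) ≤ C * Ih a b p r k (s / (s + r))) := by
  classical
  obtain ⟨δ, ε, hδ0, hδε, hε1, hcomp⟩ := compare hm hn a b hab p hp hp1 r hr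
  have hε0 : 0 < ε := hδ0.trans_le hδε
  have hmaster : ∀ t : ℝ, ∃ K : ℝ, 0 < K ∧ ∃ c C : ℝ, 0 < c ∧ c ≤ 1 ∧ 1 ≤ C ∧
      (0 ≤ t → ∀ k : ℕ, 1 ≤ k →
        c * K ^ k ≤ Ih a b p r k t ∧ Ih a b p r k t ≤ C * K ^ k) ∧
      (t = 0 → 2 ≤ K) ∧ (t = 1 → K < 1) := by
    intro t
    obtain ⟨K, c, C, h1, h2, h3, h4, h5, h6, h7⟩ := master hm hn a b hab p hp hp1 r hr t
    exact ⟨K, h1, c, C, h2, h3, h4, h5, h6, h7⟩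
  choose K hK cc CC hcc hcc1 hCC hIh hK0 hK1 using hmaster
  set gl : ℝ → ℝ := fun t => Real.log (K t) with hgl
  have hpos : ∀ t, 0 ≤ t → ∀ k : ℕ, 1 ≤ k → 0 < Ih a b p r k t := by
    intro t ht k hk
    have h1 := (hIh t ht k hk).1
    have h0 : 0 < cc t * K t ^ k := mul_pos (hcc t) (pow_pos (hK t) k)
    linarith
  have tend : ∀ t, 0 ≤ t →
      Tendsto (fun k : ℕ => Real.log (Ih a b p r k t) / k) atTop (𝓝 (gl t)) := by
    intro t ht
    have hlow : ∀ᶠ k : ℕ in atTop,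
        Real.log (cc t) / k + Real.log (K t) ≤ Real.log (Ih a b p r k t) / k := by
      filter_upwards [eventually_ge_atTop 1] with k hk
      have hkR : (0 : ℝ) < (k : ℝ) := by exact_mod_cast hk
      have h1 : Real.log (cc t * K t ^ k) ≤ Real.log (Ih a b p r k t) :=
        Real.log_le_log (mul_pos (hcc t) (pow_pos (hK t) k)) (hIh t ht k hk).1
      rw [Real.log_mul (hcc t).ne' (pow_pos (hK t) k).ne', Real.log_pow] at h1
      have heq : (Real.log (cc t) + (k : ℝ) * Real.log (K t)) / k
          = Real.log (cc t) / k + Real.log (K t) := by field_simp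
      rw [← heq]
      gcongr
    have hup : ∀ᶠ k : ℕ in atTop,
        Real.log (Ih a b p r k t) / k ≤ Real.log (CC t) / k + Real.log (K t) := by
      filter_upwards [eventually_ge_atTop 1] with k hk
      have hkR : (0 : ℝ) < (k : ℝ) := by exact_mod_cast hk
      have h1 : Real.log (Ih a b p r k t) ≤ Real.log (CC t * K t ^ k) :=
        Real.log_le_log (hpos t ht k hk) (hIh t ht k hk).2
      rw [Real.log_mul (lt_of_lt_of_le one_pos (hCC t)).ne' (pow_pos (hK t) k).ne',
        Real.log_pow] at h1
      have heq : (Real.log (CC t) + (k : ℝ) * Real.log (K t)) / k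
          = Real.log (CC t) / k + Real.log (K t) := by field_simp
      rw [← heq]
      gcongr
    have hl : Tendsto (fun k : ℕ => Real.log (cc t) / k + Real.log (K t)) atTop
        (𝓝 (0 + Real.log (K t))) :=
      (tendsto_const_div_atTop_nhds_zero_nat _).add tendsto_const_nhds
    have hu : Tendsto (fun k : ℕ => Real.log (CC t) / k + Real.log (K t)) atTop
        (𝓝 (0 + Real.log (K t))) :=
      (tendsto_const_div_atTop_nhds_zero_nat _).add tendsto_const_nhds
    rw [zero_add] at hl hu
    exact tendsto_of_tendsto_of_tendsto_of_le_of_le' hl hu hlow hup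
  have hgdiff : ∀ t t', 0 ≤ t → t ≤ t' →
      (t' - t) * Real.log δ ≤ gl t' - gl t ∧ gl t' - gl t ≤ (t' - t) * Real.log ε := by
    intro t t' ht htt'
    have ht' : 0 ≤ t' := le_trans ht htt'
    have h1 : ∀ᶠ k : ℕ in atTop,
        Real.log (Ih a b p r k t) / k + (t' - t) * Real.log δ
          ≤ Real.log (Ih a b p r k t') / k ∧
        Real.log (Ih a b p r k t') / k
          ≤ Real.log (Ih a b p r k t) / k + (t' - t) * Real.log ε := by
      filter_upwards [eventually_ge_atTop 1] with k hk
      obtain ⟨hlo, hhi⟩ := hcomp t t' ht htt' k hk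
      have hIt := hpos t ht k hk
      have hIt' := hpos t' ht' k hk
      have hkR : (0 : ℝ) < (k : ℝ) := by exact_mod_cast hk
      have hδk : 0 < (δ ^ k : ℝ) := pow_pos hδ0 k
      have hεk : 0 < (ε ^ k : ℝ) := pow_pos hε0 k
      constructor
      · have h2 : Real.log (Ih a b p r k t * (δ ^ k) ^ (t' - t))
            ≤ Real.log (Ih a b p r k t') :=
          Real.log_le_log (mul_pos hIt (Real.rpow_pos_of_pos hδk _)) hlo
        rw [Real.log_mul hIt.ne' (Real.rpow_pos_of_pos hδk _).ne',
          Real.log_rpow hδk, Real.log_pow] at h2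
        have heq : (Real.log (Ih a b p r k t) + (t' - t) * ((k : ℝ) * Real.log δ)) / k
            = Real.log (Ih a b p r k t) / k + (t' - t) * Real.log δ := by
          field_simp
        rw [← heq]
        gcongr
      · have h2 : Real.log (Ih a b p r k t')
            ≤ Real.log (Ih a b p r k t * (ε ^ k) ^ (t' - t)) :=
          Real.log_le_log hIt' hhi
        rw [Real.log_mul hIt.ne' (Real.rpow_pos_of_pos hεk _).ne',
          Real.log_rpow hεk, Real.log_pow] at h2
        have heq : (Real.log (Ih a b p r k t) + (t' - t) * ((k : ℝ) * Real.log ε)) / k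
            = Real.log (Ih a b p r k t) / k + (t' - t) * Real.log ε := by
          field_simp
        rw [← heq]
        gcongr
    have hTd : Tendsto (fun k : ℕ =>
        Real.log (Ih a b p r k t') / k - Real.log (Ih a b p r k t) / k) atTop
        (𝓝 (gl t' - gl t)) := (tend t' ht').sub (tend t ht)
    constructor
    · refine le_of_tendsto_of_tendsto tendsto_const_nhds hTd ?_
      filter_upwards [h1] with k hk
      linarith [hk.1]
    · refine le_of_tendsto_of_tendsto hTd tendsto_const_nhds ?_
      filter_upwards [h1] with k hk
      linarith [hk.2]
  have hlogε : Real.log ε < 0 := Real.log_neg hε0 hε1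
  have hanti : ∀ t t', 0 ≤ t → t < t' → gl t' < gl t := by
    intro t t' ht h
    have h2 := (hgdiff t t' ht h.le).2
    have h3 : (t' - t) * Real.log ε < 0 := mul_neg_of_pos_of_neg (by linarith) hlogε
    linarith
  have hg0 : 0 < gl 0 := Real.log_pos (by have := hK0 0 rfl; linarith)
  have hg1 : gl 1 < 0 := Real.log_neg (hK 1) (hK1 1 rfl)
  have hlip : ContinuousOn gl (Set.Icc 0 1) := by
    set L := max |Real.log δ| |Real.log ε| with hL
    have hL0 : 0 ≤ L := le_trans (abs_nonneg _) (le_max_left _ _)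
    have key : ∀ x y : ℝ, 0 ≤ x → x ≤ y → |gl y - gl x| ≤ L * (y - x) := by
      intro x y hx hxy
      obtain ⟨hlo, hhi⟩ := hgdiff x y hx hxy
      have hd1 : -L ≤ Real.log δ := by
        have := le_max_left |Real.log δ| |Real.log ε|
        have h2 := (abs_le.1 this).1
        linarith
      have hd2 : Real.log ε ≤ L := by
        have := le_max_right |Real.log δ| |Real.log ε|
        exact le_trans (le_abs_self _) this
      have hyx : 0 ≤ y - x := by linarith
      rw [abs_le]
      constructor
      · have : -(L) * (y - x) ≤ (y - x) * Real.log δ := by nlinarith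
        linarith
      · have : (y - x) * Real.log ε ≤ L * (y - x) := by nlinarith
        linarith
    refine (LipschitzOnWith.of_dist_le_mul (K := Real.toNNReal L) ?_).continuousOn
    intro s hs u hu
    rw [Real.coe_toNNReal L hL0, Real.dist_eq, Real.dist_eq]
    rcases le_total s u with h | h
    · calc |gl s - gl u| = |gl u - gl s| := abs_sub_comm _ _
        _ ≤ L * (u - s) := key s u hs.1 h
        _ = L * |s - u| := by rw [abs_sub_comm, abs_of_nonneg (by linarith)]
    · calc |gl s - gl u| ≤ L * (s - u) := key u s hu.1 h
        _ = L * |s - u| := by rw [abs_of_nonneg (by linarith)]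
  have hivt : (0 : ℝ) ∈ gl '' Set.Ioo 0 1 :=
    intermediate_value_Ioo' zero_le_one hlip ⟨hg1, hg0⟩
  obtain ⟨t₀, ht₀mem, ht₀⟩ := hivt
  obtain ⟨h01, h11⟩ := ht₀mem
  set s₀ := r * t₀ / (1 - t₀) with hs₀def
  have hne1 : (1 : ℝ) - t₀ ≠ 0 := by linarith
  have hs₀ : 0 < s₀ := div_pos (mul_pos hr h01) (by linarith)
  have hsr0 : 0 < s₀ + r := by linarith
  have hfrac : s₀ / (s₀ + r) = t₀ := by
    rw [div_eq_iff hsr0.ne']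
    rw [hs₀def]
    field_simp
    ring
  have hsol : ∀ s', 0 < s' →
      Tendsto (fun k : ℕ => Real.log (Ih a b p r k (s' / (s' + r))) / k) atTop (𝓝 0) →
      s' = s₀ := by
    intro s' hs' htd
    have hsr' : 0 < s' + r := by linarith
    have ht'0 : 0 ≤ s' / (s' + r) := by positivity
    have hgz : gl (s' / (s' + r)) = 0 := tendsto_nhds_unique (tend _ ht'0) htd
    have hteq : s' / (s' + r) = t₀ := by
      by_contra hne'
      rcases lt_or_gt_of_ne hne' with h | h
      · have := hanti _ t₀ ht'0 h
        rw [hgz, ht₀] at this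
        exact lt_irrefl 0 this
      · have := hanti t₀ _ h01.le h
        rw [hgz, ht₀] at this
        exact lt_irrefl 0 this
    have h2 : s' / (s' + r) = s₀ / (s₀ + r) := by rw [hteq, hfrac]
    rw [div_eq_div_iff hsr'.ne' hsr0.ne'] at h2
    have h3 : s' * r = s₀ * r := by ring_nf at h2 ⊢; linarith
    exact mul_right_cancel₀ hr.ne' h3
  refine ⟨fun t ht => ⟨gl t, tend t ht⟩, ?_, ?_⟩
  · refine ⟨s₀, ⟨hs₀, ?_⟩, fun s' h => hsol s' h.1 h.2⟩
    rw [hfrac]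
    have h4 := tend t₀ h01.le
    rw [ht₀] at h4
    exact h4
  · intro s hs htd
    have hsr' : 0 < s + r := by linarith
    have ht0 : 0 ≤ s / (s + r) := by positivity
    set t := s / (s + r) with htdef
    have hgz : gl t = 0 := tendsto_nhds_unique (tend _ ht0) htd
    have hKone : K t = 1 := by
      rcases Real.log_eq_zero.1 hgz with h | h | h
      · exact absurd h (hK _).ne'
      · exact h
      · nlinarith [hK t]
    have hbnd : ∀ k : ℕ, 1 ≤ k → cc t ≤ Ih a b p r k t ∧ Ih a b p r k t ≤ CC t := by
      intro k hk
      have h := hIh t ht0 k hk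
      rwa [hKone, one_pow, mul_one, mul_one] at h
    have hccpos := hcc t
    have hCCpos : 0 < CC t := lt_of_lt_of_le one_pos (hCC t)
    have hquot : 0 < CC t / cc t := by positivity
    refine ⟨CC t / cc t, ?_, ?_⟩
    · rw [le_div_iff₀ hccpos, one_mul]
      exact le_trans (hcc1 t) (hCC t)
    · intro k l hk hl
      obtain ⟨hck, hCk⟩ := hbnd k hk
      obtain ⟨hcl, hCl⟩ := hbnd l hl
      constructor
      · rw [div_le_iff₀ hquot]
        calc Ih a b p r k t ≤ CC t := hCk
          _ = cc t * (CC t / cc t) := by field_simp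
          _ ≤ Ih a b p r l t * (CC t / cc t) :=
            mul_le_mul_of_nonneg_right hcl hquot.le
      · calc Ih a b p r l t ≤ CC t := hCl
          _ = CC t / cc t * cc t := by field_simp
          _ ≤ CC t / cc t * Ih a b p r k t :=
            mul_le_mul_of_nonneg_left hck hquot.le

end

end LGQ
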